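/- For every single-item first-price auction with valuations v_1, …, v_n ≥ 0, every tie-breaking rule, and every mixed Nash equilibrium B, the expected social welfare satisfies E_{b∼B}[SW(b)] ≥ (1 − 1/e)·max_i v_i. Equivalently, the price of anarchy of mixed Nash equilibria in first-price single-item auctions is at most e/(e − 1). -/

import Mathlib

open MeasureTheory

/-- For every single-item first-price auction (any valuations `vᵢ ≥ 0`, any
tie-breaking rule) and every mixed Nash equilibrium `B`, the expected social welfare is at least
`(1 − 1/e)·maxᵢ vᵢ`; i.e. the mixed price of anarchy is at most `e/(e−1)`. -/
theorem stmt_3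
    (n : ℕ) (hn : 0 < n)
    (v : Fin n → ℝ) (hv : ∀ i, 0 ≤ v i)
    -- the tie-breaking rule: a measurable probability vector supported on the highest bidders
    (τ : (Fin n → ℝ) → Fin n → ℝ)
    (hτ_meas : ∀ i, Measurable fun b => τ b i)
    (hτ_nonneg : ∀ b i, 0 ≤ τ b i)
    (hτ_sum : ∀ b, ∑ i, τ b i = 1)
    (hτ_max : ∀ b i, (∃ k, b i < b k) → τ b i = 0)
    -- utilities
    (u : Fin n → (Fin n → ℝ) → ℝ)
    (hu : ∀ i b, u i b = τ b i * (v i - b i))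
    -- the mixed strategy profile: independent bids, supported on `[0, ∞)`
    (B : Fin n → Measure ℝ)
    [∀ i, IsProbabilityMeasure (B i)]
    (hB_supp : ∀ i, B i (Set.Iio 0) = 0)
    -- all relevant expectations exist
    (hInt : ∀ i, Integrable (u i) (Measure.pi B))
    (hIntDev : ∀ i (a : ℝ),
      Integrable (fun b => u i (Function.update b i a)) (Measure.pi B))
    -- the Nash equilibrium condition
    (hNash : ∀ i (a : ℝ), 0 ≤ a →
      (∫ b, u i b ∂(Measure.pi B)) ≥ ∫ b, u i (Function.update b i a) ∂(Measure.pi B)) :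
    (∫ b, (∑ i, τ b i * v i) ∂(Measure.pi B)) ≥ (1 - (Real.exp 1)⁻¹) * ⨆ i, v i := by
  classical
  haveI : Nonempty (Fin n) := Fin.pos_iff_nonempty.mp hn
  set μ := Measure.pi B with hμdef
  haveI : IsProbabilityMeasure μ := by
    rw [hμdef]; infer_instance
  -- the maximizing player
  obtain ⟨i0, hi0⟩ : ∃ i0, ∀ j, v j ≤ v i0 := Finite.exists_max v
  have hsup : (⨆ i, v i) = v i0 :=
    le_antisymm (ciSup_le hi0) (le_ciSup (Set.Finite.bddAbove (Set.finite_range v)) i0)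
  set V := v i0 with hVdef
  -- τ b i ≤ 1
  have hτ_le_one : ∀ b i, τ b i ≤ 1 := by
    intro b i
    calc τ b i ≤ ∑ j, τ b j :=
          Finset.single_le_sum (fun j _ => hτ_nonneg b j) (Finset.mem_univ i)
      _ = 1 := hτ_sum b
  -- SW integrand is integrable
  have hSWmeas : Measurable fun b => ∑ i, τ b i * v i := by
    exact Finset.measurable_sum _ fun i _ => (hτ_meas i).mul_const _
  have hSWint : Integrable (fun b => ∑ i, τ b i * v i) μ := by
    refine (integrable_const (∑ i, v i)).mono' hSWmeas.aestronglyMeasurable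
      (ae_of_all _ fun b => ?_)
    rw [Real.norm_eq_abs]
    calc |∑ i, τ b i * v i| ≤ ∑ i, |τ b i * v i| := Finset.abs_sum_le_sum_abs _ _
      _ ≤ ∑ i, v i := by
          refine Finset.sum_le_sum fun i _ => ?_
          rw [abs_of_nonneg (mul_nonneg (hτ_nonneg b i) (hv i))]
          calc τ b i * v i ≤ 1 * v i :=
                mul_le_mul_of_nonneg_right (hτ_le_one b i) (hv i)
            _ = v i := one_mul _
  have hLHSnn : 0 ≤ ∫ b, (∑ i, τ b i * v i) ∂μ := by
    refine integral_nonneg fun b => ?_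
    exact Finset.sum_nonneg fun i _ => mul_nonneg (hτ_nonneg b i) (hv i)
  -- basic facts about e
  have hexp1 : (1:ℝ) < Real.exp 1 := Real.one_lt_exp_iff.mpr one_pos
  have hEpos : (0:ℝ) < (Real.exp 1)⁻¹ := inv_pos.mpr (lt_trans one_pos hexp1)
  have hElt1 : (Real.exp 1)⁻¹ < 1 := inv_lt_one_of_one_lt₀ hexp1
  -- trivial case : V ≤ 0
  rcases le_or_gt V 0 with hV | hV
  · rw [hsup]
    calc (1 - (Real.exp 1)⁻¹) * V ≤ 0 :=
          mul_nonpos_of_nonneg_of_nonpos (by linarith) hV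
      _ ≤ _ := hLHSnn
  -- main case
  rw [hsup]
  set θ := (1 - (Real.exp 1)⁻¹) * V with hθdef
  have hθpos : 0 < θ := mul_pos (by linarith) hV
  have hθV : θ < V := by nlinarith
  -- the highest bid
  set M : (Fin n → ℝ) → ℝ := fun b => Finset.univ.sup' Finset.univ_nonempty b with hMdef
  have hbM : ∀ (b : Fin n → ℝ) i, b i ≤ M b := fun b i =>
    Finset.le_sup' b (Finset.mem_univ i)
  have hMmem : ∀ b : Fin n → ℝ, ∃ k, M b = b k := by
    intro b
    obtain ⟨k, -, hk⟩ := Finset.exists_mem_eq_sup' Finset.univ_nonempty b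
    exact ⟨k, hk⟩
  -- key pointwise identity : the revenue is the highest bid
  have hrev : ∀ b : Fin n → ℝ, ∑ i, τ b i * b i = M b := by
    intro b
    have h1 : ∀ i : Fin n, τ b i * b i = τ b i * M b := by
      intro i
      rcases eq_or_lt_of_le (hbM b i) with h | h
      · rw [h]
      · obtain ⟨k, hk⟩ := hMmem b
        rw [hτ_max b i ⟨k, hk ▸ h⟩, zero_mul, zero_mul]
    calc ∑ i, τ b i * b i = ∑ i, τ b i * M b := Finset.sum_congr rfl fun i _ => h1 i
      _ = (∑ i, τ b i) * M b := by rw [Finset.sum_mul]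
      _ = M b := by rw [hτ_sum b, one_mul]
  -- SW decomposition
  have hdecomp : ∀ b : Fin n → ℝ, ∑ i, τ b i * v i = (∑ i, u i b) + M b := by
    intro b
    rw [← hrev b, ← Finset.sum_add_distrib]
    refine Finset.sum_congr rfl fun i _ => ?_
    rw [hu]; ring
  -- integrability of the pieces
  have hSumUint : Integrable (fun b => ∑ i, u i b) μ :=
    integrable_finset_sum _ fun i _ => hInt i
  have hMint : Integrable M μ := by
    refine (hSWint.sub hSumUint).congr (ae_of_all _ fun b => ?_)
    show (∑ i, τ b i * v i) - (∑ i, u i b) = M b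
    rw [hdecomp b]; ring
  -- all expected utilities are nonnegative
  have hUnn : ∀ i, 0 ≤ ∫ b, u i b ∂μ := by
    intro i
    refine le_trans ?_ (hNash i 0 le_rfl)
    refine integral_nonneg fun b => ?_
    rw [hu]
    refine mul_nonneg (hτ_nonneg _ _) ?_
    rw [Function.update_self, sub_zero]
    exact hv i
  set U := ∫ b, u i0 b ∂μ with hUdef
  -- almost every bid profile has nonnegative coordinates
  have hae : ∀ᵐ b ∂μ, ∀ k, 0 ≤ b k := by
    rw [ae_all_iff]
    intro k
    rw [ae_iff]
    have hset : {b : Fin n → ℝ | ¬ 0 ≤ b k}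
        = Set.pi Set.univ (Function.update (fun _ : Fin n => Set.univ) k (Set.Iio 0)) := by
      ext b
      simp only [Set.mem_setOf_eq, not_le, Set.mem_pi, Set.mem_univ, forall_true_left]
      constructor
      · intro h j
        rcases eq_or_ne j k with rfl | hj
        · simpa using h
        · simp [Function.update_of_ne hj]
      · intro h
        have := h k
        simpa using this
    rw [hset, hμdef, Measure.pi_pi]
    refine Finset.prod_eq_zero (Finset.mem_univ k) ?_
    simp [hB_supp k]
  -- the low-bids events
  set S : ℝ → Set (Fin n → ℝ) := fun a => {b | ∀ k, b k < a} with hSdef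
  have hSmeas : ∀ a, MeasurableSet (S a) := by
    intro a
    have : S a = ⋂ k, {b : Fin n → ℝ | b k < a} := by
      ext b; simp [hSdef]
    rw [this]
    exact MeasurableSet.iInter fun k =>
      measurableSet_lt (measurable_pi_apply k) measurable_const
  set Q : ℝ → ℝ := fun a => (μ (S a)).toReal with hQdef
  have hQmono : Monotone Q := by
    intro a a' haa'
    refine ENNReal.toReal_mono (measure_ne_top μ _) (measure_mono ?_)
    intro b hb k
    exact lt_of_lt_of_le (hb k) haa'
  have hQmeas : Measurable Q := hQmono.measurable
  have hQnn : ∀ a, 0 ≤ Q a := fun a => ENNReal.toReal_nonneg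
  have hQle1 : ∀ a, Q a ≤ 1 := by
    intro a
    rw [hQdef]
    simp only
    rw [← ENNReal.toReal_one]
    exact ENNReal.toReal_mono ENNReal.one_ne_top prob_le_one
  -- the deviation bound
  have hdev : ∀ a ∈ Set.Ioc (0:ℝ) θ, Q a ≤ U * (V - a)⁻¹ := by
    intro a ha
    have haV : a < V := lt_of_le_of_lt ha.2 hθV
    have hVa : 0 < V - a := by linarith
    have h1 : U ≥ ∫ b, u i0 (Function.update b i0 a) ∂μ := hNash i0 a (le_of_lt ha.1)
    have h2 : ∫ b, u i0 (Function.update b i0 a) ∂μ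
        ≥ ∫ b, (S a).indicator (fun _ => V - a) b ∂μ := by
      refine integral_mono_ae ((integrable_const (V - a)).indicator (hSmeas a))
        (hIntDev i0 a) ?_
      filter_upwards [hae] with b hb
      by_cases hbs : b ∈ S a
      · rw [Set.indicator_of_mem hbs, hu]
        set b' := Function.update b i0 a with hb'def
        have hb'i0 : b' i0 = a := Function.update_self i0 a b
        have hb'k : ∀ k, k ≠ i0 → b' k < a := by
          intro k hk
          rw [hb'def, Function.update_of_ne hk]
          exact hbs k
        have hτk : ∀ k, k ≠ i0 → τ b' k = 0 := by
          intro k hk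
          exact hτ_max b' k ⟨i0, by rw [hb'i0]; exact hb'k k hk⟩
        have hτi0 : τ b' i0 = 1 := by
          have := hτ_sum b'
          rwa [Finset.sum_eq_single_of_mem i0 (Finset.mem_univ i0)
            (fun k _ hk => hτk k hk)] at this
        rw [hτi0, hb'i0, one_mul]
      · rw [Set.indicator_of_notMem hbs, hu]
        refine mul_nonneg (hτ_nonneg _ _) ?_
        rw [Function.update_self]
        linarith
    have h3 : ∫ b, (S a).indicator (fun _ => V - a) b ∂μ = Q a * (V - a) := by
      rw [integral_indicator_const _ (hSmeas a)]
      simp [hQdef, smul_eq_mul, mul_comm, Measure.real]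
    have h4 : Q a * (V - a) ≤ U := by
      rw [← h3]; exact le_trans h2 h1
    have h5 : Q a ≤ U / (V - a) := (le_div_iff₀ hVa).mpr h4
    rwa [div_eq_mul_inv] at h5
  -- the Fubini step
  set ν := volume.restrict (Set.Ioc (0:ℝ) θ) with hνdef
  haveI : IsFiniteMeasure ν := by
    constructor
    rw [hνdef, Measure.restrict_apply_univ, Real.volume_Ioc]
    exact ENNReal.ofReal_lt_top
  set A : Set (ℝ × (Fin n → ℝ)) := {p | ∀ k, p.2 k < p.1} with hAdef
  have hA : MeasurableSet A := by
    have : A = ⋂ k, {p : ℝ × (Fin n → ℝ) | p.2 k < p.1} := by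
      ext p; simp [hAdef]
    rw [this]
    exact MeasurableSet.iInter fun k =>
      measurableSet_lt (measurable_snd.eval) measurable_fst
  set g : (Fin n → ℝ) → ℝ := fun b => max (θ - M b) 0 with hgdef
  have hgint : Integrable g μ := ((integrable_const θ).sub hMint).pos_part
  have hTint : Integrable (fun b => θ - M b) μ := (integrable_const θ).sub hMint
  have hE1 : (ν.prod μ) A = ∫⁻ a, μ (S a) ∂ν := by
    rw [Measure.prod_apply hA]
    rfl
  have hE2 : (ν.prod μ) A = ∫⁻ b, ENNReal.ofReal (g b) ∂μ := by
    rw [Measure.prod_apply_symm hA]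
    refine lintegral_congr_ae ?_
    filter_upwards [hae] with b hb
    have hMb : 0 ≤ M b := le_trans (hb i0) (hbM b i0)
    have hslice : (fun a => (a, b)) ⁻¹' A = Set.Ioi (M b) := by
      ext a
      simp only [Set.mem_preimage, hAdef, Set.mem_setOf_eq, Set.mem_Ioi, hMdef]
      rw [Finset.sup'_lt_iff]
      simp
    rw [hslice, hνdef, Measure.restrict_apply measurableSet_Ioi]
    have hinter : Set.Ioi (M b) ∩ Set.Ioc 0 θ = Set.Ioc (M b) θ := by
      ext a
      simp only [Set.mem_inter_iff, Set.mem_Ioi, Set.mem_Ioc]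
      constructor
      · rintro ⟨h1, _, h3⟩; exact ⟨h1, h3⟩
      · rintro ⟨h1, h2⟩; exact ⟨h1, lt_of_le_of_lt hMb h1, h2⟩
    rw [hinter, Real.volume_Ioc]
    rcases le_total 0 (θ - M b) with h | h
    · rw [hgdef]; simp only; rw [max_eq_left h]
    · rw [hgdef]; simp only
      rw [max_eq_right h, ENNReal.ofReal_of_nonpos h, ENNReal.ofReal_zero]
  have hQaem : Measurable fun a => μ (S a) := by
    refine Monotone.measurable fun a a' haa' => measure_mono ?_
    intro b hb k
    exact lt_of_lt_of_le (hb k) haa'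
  have hE3 : ∫ a, Q a ∂ν = ((ν.prod μ) A).toReal := by
    rw [hQdef]
    rw [integral_toReal hQaem.aemeasurable (ae_of_all _ fun a => measure_lt_top μ _)]
    rw [hE1]
  have hgaesm : AEStronglyMeasurable g μ := by
    exact (aestronglyMeasurable_const.sub hMint.1).sup aestronglyMeasurable_const
  have hE4 : ∫ b, g b ∂μ = ((ν.prod μ) A).toReal := by
    have h := integral_eq_lintegral_of_nonneg_ae (μ := μ) (f := g)
      (ae_of_all _ fun b => le_max_right _ _) hgaesm
    rw [h, hE2]
  have hfub : θ - ∫ b, M b ∂μ ≤ ∫ a, Q a ∂ν := by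
    calc θ - ∫ b, M b ∂μ = ∫ b, (θ - M b) ∂μ := by
          rw [integral_sub (integrable_const θ) hMint, integral_const]
          simp [measure_univ]
      _ ≤ ∫ b, g b ∂μ :=
          integral_mono hTint hgint fun b => le_max_left _ _
      _ = ((ν.prod μ) A).toReal := hE4
      _ = ∫ a, Q a ∂ν := hE3.symm
  -- comparison of the integrals over a
  have hQint : IntegrableOn Q (Set.Ioc 0 θ) volume := by
    refine (integrable_const (1:ℝ)).mono' hQmeas.aestronglyMeasurable
      (ae_of_all _ fun a => ?_)
    rw [Real.norm_eq_abs, abs_of_nonneg (hQnn a)]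
    exact hQle1 a
  have hfint : IntegrableOn (fun a => U * (V - a)⁻¹) (Set.Ioc 0 θ) volume := by
    refine (ContinuousOn.integrableOn_compact isCompact_Icc ?_).mono_set
      Set.Ioc_subset_Icc_self
    refine continuousOn_const.mul (ContinuousOn.inv₀
      (continuousOn_const.sub continuousOn_id) ?_)
    intro a ha
    have : a ≤ θ := ha.2
    have : a < V := lt_of_le_of_lt this hθV
    intro h
    have h2 : V - a = 0 := h
    linarith
  have hlog : ∫ a in Set.Ioc (0:ℝ) θ, (V - a)⁻¹ = 1 := by
    rw [← intervalIntegral.integral_of_le (le_of_lt hθpos)]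
    rw [intervalIntegral.integral_comp_sub_left (fun x => x⁻¹) V]
    rw [integral_inv ?hne]
    case hne =>
      rw [Set.uIcc_of_le (by linarith : V - θ ≤ V - 0)]
      intro h
      have := h.1
      simp only [sub_zero] at *
      linarith
    have hVθ : V - θ = (Real.exp 1)⁻¹ * V := by rw [hθdef]; ring
    rw [sub_zero, hVθ]
    have hne : (Real.exp 1)⁻¹ * V ≠ 0 := by positivity
    have : V / ((Real.exp 1)⁻¹ * V) = Real.exp 1 := by
      field_simp
    rw [this, Real.log_exp]
  have hcomp : ∫ a, Q a ∂ν ≤ U := by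
    calc ∫ a, Q a ∂ν ≤ ∫ a in Set.Ioc (0:ℝ) θ, U * (V - a)⁻¹ := by
          rw [hνdef]
          exact setIntegral_mono_on hQint hfint measurableSet_Ioc fun a ha => hdev a ha
      _ = U * ∫ a in Set.Ioc (0:ℝ) θ, (V - a)⁻¹ := integral_const_mul U _
      _ = U := by rw [hlog, mul_one]
  -- conclusion
  have hUθ : θ - ∫ b, M b ∂μ ≤ U := le_trans hfub hcomp
  have hsumsplit : ∫ b, (∑ i, τ b i * v i) ∂μ = (∑ i, ∫ b, u i b ∂μ) + ∫ b, M b ∂μ := by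
    calc ∫ b, (∑ i, τ b i * v i) ∂μ = ∫ b, ((∑ i, u i b) + M b) ∂μ :=
          integral_congr_ae (ae_of_all _ fun b => hdecomp b)
      _ = (∫ b, (∑ i, u i b) ∂μ) + ∫ b, M b ∂μ := integral_add hSumUint hMint
      _ = (∑ i, ∫ b, u i b ∂μ) + ∫ b, M b ∂μ := by
          rw [integral_finset_sum _ fun i _ => hInt i]
  have hUsum : U ≤ ∑ i, ∫ b, u i b ∂μ :=
    Finset.single_le_sum (fun i _ => hUnn i) (Finset.mem_univ i0)
  rw [hsumsplit]
  have : θ ≤ U + ∫ b, M b ∂μ := by linarith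
  linarith
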